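/- Let L₁ be a k₁×k₁ real symmetric matrix, L₂ a k₂×k₂ real symmetric matrix (k₂ ≥ 2), s ∈ {1,…,k₂}, and let L = I_{k₁} ⊗ L₂ + L₁ ⊗ (e_s e_sᵀ) be the composite matrix. Let (λ, v) be an eigenpair of L and suppose the (k₂−1)×(k₂−1) matrix M obtained from L₂ − λI by deleting its s-th row and s-th column is invertible. Define v̄ ∈ ℝ^{k₁} by v̄_i = v[(i,s)], and let l ∈ ℝ^{k₂−1} be the s-th column of L₂ with its s-th entry removed. Then v̄ ≠ 0 and L₁ v̄ = μ v̄, where μ = λ − L₂[s,s] + lᵀ M^{−1} l; in particular, v̄ is an eigenvector of L₁. -/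

import Mathlib

/-- The composite matrix `L = I_{k₁} ⊗ L₂ + L₁ ⊗ (e_s e_sᵀ)`, indexed by pairs. -/
def composite {k₁ k₂ : ℕ} (L₁ : Matrix (Fin k₁) (Fin k₁) ℝ) (L₂ : Matrix (Fin k₂) (Fin k₂) ℝ)
    (s : Fin k₂) : Matrix (Fin k₁ × Fin k₂) (Fin k₁ × Fin k₂) ℝ :=
  Matrix.of fun p q =>
    (if p.1 = q.1 then L₂ p.2 q.2 else 0) +
    L₁ p.1 q.1 * ((if p.2 = s then (1 : ℝ) else 0) * (if q.2 = s then (1 : ℝ) else 0))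

private lemma sum_split_aux {k : ℕ} (s : Fin k) (f : Fin k → ℝ) :
    ∑ b, f b = f s + ∑ b : {a : Fin k // a ≠ s}, f b.val := by
  rw [Fintype.sum_eq_add_sum_compl s]
  congr 1
  exact Finset.sum_subtype (p := fun a => a ≠ s) ({s}ᶜ) (fun x => by simp) f

theorem stmt_5 (k₁ k₂ : ℕ) (hk₂ : 2 ≤ k₂)
    (L₁ : Matrix (Fin k₁) (Fin k₁) ℝ) (hL₁ : L₁.IsSymm)
    (L₂ : Matrix (Fin k₂) (Fin k₂) ℝ) (hL₂ : L₂.IsSymm)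
    (s : Fin k₂) (lam : ℝ)
    (v : Fin k₁ × Fin k₂ → ℝ) (hv : v ≠ 0)
    (hev : (composite L₁ L₂ s).mulVec v = lam • v)
    (M : Matrix {a : Fin k₂ // a ≠ s} {a : Fin k₂ // a ≠ s} ℝ)
    (hM : M = Matrix.of fun a b : {a : Fin k₂ // a ≠ s} =>
      (L₂ - lam • (1 : Matrix (Fin k₂) (Fin k₂) ℝ)) a.val b.val)
    (hMunit : IsUnit M)
    (vbar : Fin k₁ → ℝ) (hvbar : vbar = fun i => v (i, s))
    (l : {a : Fin k₂ // a ≠ s} → ℝ) (hl : l = fun a => L₂ a.val s) :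
    vbar ≠ 0 ∧ L₁.mulVec vbar = (lam - L₂ s s + dotProduct l (M⁻¹.mulVec l)) • vbar := by
  classical
  set w : Fin k₁ → {a : Fin k₂ // a ≠ s} → ℝ := fun i a => v (i, a.val) with hw
  -- pointwise eigen equation
  have key : ∀ (i : Fin k₁) (a : Fin k₂),
      (∑ b, L₂ a b * v (i, b)) + (if a = s then L₁.mulVec vbar i else 0)
        = lam * v (i, a) := by
    intro i a
    have h := congrFun hev (i, a)
    simp only [Matrix.mulVec, dotProduct, composite, Matrix.of_apply,
      Fintype.sum_prod_type, Pi.smul_apply, smul_eq_mul] at h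
    rw [← h]
    by_cases has : a = s
    · subst has
      simp only [if_pos rfl, one_mul, hvbar, Matrix.mulVec, dotProduct,
        add_mul, Finset.sum_add_distrib, ite_mul, zero_mul, mul_ite, mul_zero, mul_one]
      congr 1
      · rw [Finset.sum_comm]
        simp
      · simp
    · simp only [if_neg has, zero_mul, mul_zero, add_zero, add_mul, Finset.sum_add_distrib,
        ite_mul, zero_mul]
      rw [Finset.sum_comm]
      simp
  -- the restricted equation
  have hMw : ∀ i, M.mulVec (w i) = (-(vbar i)) • l := by
    intro i
    funext a
    have h := key i a.val
    rw [if_neg a.prop, add_zero, sum_split_aux s (fun b => L₂ a.val b * v (i, b))] at h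
    have e1 : M.mulVec (w i) a
        = (∑ b : {a : Fin k₂ // a ≠ s}, L₂ a.val b.val * v (i, b.val)) - lam * v (i, a.val) := by
      simp only [Matrix.mulVec, dotProduct, hM, Matrix.of_apply, Matrix.sub_apply,
        Matrix.smul_apply, Matrix.one_apply, smul_eq_mul, hw]
      rw [Finset.sum_congr rfl (fun b _ => sub_mul (L₂ a.val b.val)
        (lam * (if a.val = b.val then (1:ℝ) else 0)) (v (i, b.val))), Finset.sum_sub_distrib]
      congr 1
      have : ∀ b : {a : Fin k₂ // a ≠ s},
          (lam * (if a.val = b.val then (1:ℝ) else 0)) * v (i, b.val)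
            = if a = b then lam * v (i, b.val) else 0 := by
        intro b
        by_cases hab : a = b
        · simp [hab]
        · rw [if_neg hab, if_neg (fun h => hab (Subtype.ext h))]
          ring
      rw [Finset.sum_congr rfl (fun b _ => this b)]
      simp
    rw [e1]
    simp only [Pi.smul_apply, smul_eq_mul, hl, hvbar]
    linarith [h]
  have hdet : IsUnit M.det := (Matrix.isUnit_iff_isUnit_det M).mp hMunit
  have hWi : ∀ i, w i = (-(vbar i)) • M⁻¹.mulVec l := by
    intro i
    calc w i = (M⁻¹ * M).mulVec (w i) := by
          rw [Matrix.nonsing_inv_mul M hdet, Matrix.one_mulVec]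
      _ = M⁻¹.mulVec (M.mulVec (w i)) := by rw [← Matrix.mulVec_mulVec]
      _ = M⁻¹.mulVec ((-(vbar i)) • l) := by rw [hMw i]
      _ = (-(vbar i)) • M⁻¹.mulVec l := by rw [Matrix.mulVec_smul]
  constructor
  · intro h0
    apply hv
    funext p
    obtain ⟨i, a⟩ := p
    by_cases has : a = s
    · subst has
      have : vbar i = 0 := by rw [h0]; rfl
      rw [hvbar] at this
      exact this
    · have h1 := congrFun (hWi i) ⟨a, has⟩
      have h2 : vbar i = 0 := by rw [h0]; rfl
      simpa [hw, h2] using h1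
  · funext i
    have h := key i s
    rw [if_pos rfl, sum_split_aux s (fun b => L₂ s b * v (i, b))] at h
    have hsum : ∑ b : {a : Fin k₂ // a ≠ s}, L₂ s b.val * v (i, b.val)
        = -(vbar i) * (dotProduct l (M⁻¹.mulVec l)) := by
      have e2 : ∀ b : {a : Fin k₂ // a ≠ s}, L₂ s b.val * v (i, b.val) = l b * w i b := by
        intro b
        simp only [hl, hw]
        rw [hL₂.apply b.val s]
      rw [Finset.sum_congr rfl (fun b _ => e2 b)]
      have : dotProduct l (w i) = -(vbar i) * dotProduct l (M⁻¹.mulVec l) := by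
        rw [hWi i, dotProduct_smul, smul_eq_mul]
      simpa [dotProduct] using this
    rw [hsum] at h
    simp only [Pi.smul_apply, smul_eq_mul]
    have hvi : vbar i = v (i, s) := by rw [hvbar]
    rw [← hvi] at h
    linear_combination h
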